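/- arXiv:1510.01960 — 3 statements merged into one kernel-verified Lean document; each statement's English description precedes it below -/
import Mathlib

section
/- Let f : ℝ² → ℝ be a continuously differentiable function with compact support. Then ‖f‖_{L⁴(ℝ²)} ≤ √2 · ‖f‖_{L²(ℝ²)}^{1/2} · ‖∇f‖_{L²(ℝ²)}^{1/2}, i.e. (∫_{ℝ²} |f|⁴ dx)^{1/4} ≤ √2 · (∫_{ℝ²} |f|² dx)^{1/4} · (∫_{ℝ²} ‖∇f(x)‖² dx)^{1/4}. -/
open MeasureTheory
open Real

set_option maxHeartbeats 1000000

noncomputable section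
lemma aux_hcs {X Y : Type*} [TopologicalSpace X] [T2Space X] [TopologicalSpace Y]
    {f : Y → ℝ} (hf : HasCompactSupport f) {g : X → Y} {r : Y → X}
    (hr : Continuous r) (hrg : ∀ x, r (g x) = x) :
    HasCompactSupport (fun x => f (g x)) := by
  rw [hasCompactSupport_def]
  apply IsCompact.of_isClosed_subset (hf.image hr) isClosed_closure
  apply closure_minimal _ (hf.image hr).isClosed
  intro x hx
  exact ⟨g x, subset_tsupport f hx, hrg x⟩

lemma aux_one_dim (g : ℝ → ℝ) (hg : ContDiff ℝ 1 g) (hs : HasCompactSupport g) (t : ℝ) :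
    g t ^ 2 ≤ 2 * ∫ s, |g s| * |deriv g s| := by
  have hgc : Continuous g := hg.continuous
  have hg'c : Continuous (deriv g) := hg.continuous_deriv le_rfl
  have hder : ∀ s, HasDerivAt (fun u => g u ^ 2) (2 * g s * deriv g s) s := by
    intro s
    have h := (((hg.differentiable one_ne_zero) s).hasDerivAt).fun_pow 2
    simpa [mul_comm, mul_assoc] using h
  obtain ⟨r, hr⟩ := hs.isBounded.subset_closedBall 0
  set a : ℝ := min t (-|r|) - 1 with ha
  have hat : a ≤ t := by
    have h := min_le_left t (-|r|); linarith
  have hga : g a = 0 := by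
    by_contra h
    have : a ∈ Metric.closedBall (0:ℝ) r := hr (subset_tsupport g h)
    rw [Metric.mem_closedBall, Real.dist_eq, sub_zero] at this
    have h1 : a ≤ -|r| - 1 := by
      have h := min_le_right t (-|r|); linarith
    have h2 : |a| ≤ r := this
    have := neg_abs_le a
    have := le_abs_self r
    linarith [abs_nonneg r, neg_le_of_abs_le h2]
  have hftc : ∫ s in a..t, 2 * g s * deriv g s = g t ^ 2 - g a ^ 2 := by
    apply intervalIntegral.integral_eq_sub_of_hasDerivAt (f := fun u => g u ^ 2) (fun s _ => hder s)
    exact ((continuous_const.mul hgc).mul hg'c).intervalIntegrable (μ := volume) a t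
  have hint : Integrable (fun s => |g s| * |deriv g s|) :=
    (hgc.abs.mul hg'c.abs).integrable_of_hasCompactSupport (hs.abs.mul_right)
  have h1 : g t ^ 2 = ∫ s in Set.Ioc a t, 2 * g s * deriv g s := by
    rw [← intervalIntegral.integral_of_le hat, hftc, hga]; ring
  rw [h1]
  calc ∫ s in Set.Ioc a t, 2 * g s * deriv g s
      ≤ ∫ s in Set.Ioc a t, 2 * (|g s| * |deriv g s|) := by
        apply setIntegral_mono ((((continuous_const.mul hgc).mul hg'c).integrable_of_hasCompactSupport
          (hs.mul_left.mul_right)).integrableOn) ((hint.const_mul 2).integrableOn)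
        intro s
        calc 2 * g s * deriv g s ≤ |2 * g s * deriv g s| := le_abs_self _
          _ = 2 * (|g s| * |deriv g s|) := by simp [abs_mul, mul_assoc]
    _ ≤ ∫ s, 2 * (|g s| * |deriv g s|) := by
        apply setIntegral_le_integral (hint.const_mul 2)
        filter_upwards with s
        positivity
    _ = 2 * ∫ s, |g s| * |deriv g s| := integral_const_mul 2 _

abbrev E2 := EuclideanSpace ℝ (Fin 2)

def Tmap : ℝ × ℝ → E2 := fun p => MeasurableEquiv.toLp 2 (Fin 2 → ℝ) ![p.1, p.2]

lemma Tmap_mp : MeasurePreserving Tmap volume volume :=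
  ((EuclideanSpace.volume_preserving_symm_measurableEquiv_toLp (Fin 2)).symm).comp
    ((volume_preserving_finTwoArrow ℝ).symm)

lemma Tmap_me : MeasurableEmbedding Tmap :=
  ((MeasurableEquiv.finTwoArrow (α := ℝ)).symm.trans
    (MeasurableEquiv.toLp 2 (Fin 2 → ℝ))).measurableEmbedding

lemma Tmap_apply (p : ℝ × ℝ) : Tmap p = (WithLp.equiv 2 (Fin 2 → ℝ)).symm ![p.1, p.2] := rfl

lemma Tmap_zero (p : ℝ × ℝ) : (Tmap p) 0 = p.1 := rfl
lemma Tmap_one (p : ℝ × ℝ) : (Tmap p) 1 = p.2 := rfl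

lemma Tmap_cont : Continuous Tmap := by
  apply (PiLp.continuous_toLp 2 (fun _ : Fin 2 => ℝ)).comp
  exact continuous_pi fun i => by fin_cases i <;> dsimp <;> [exact continuous_fst; exact continuous_snd]

lemma Tmap_line0 (y : ℝ) : (fun s => Tmap (s, y)) =
    fun s => s • (EuclideanSpace.single 0 (1:ℝ)) + Tmap (0, y) := by
  funext s
  refine PiLp.ext fun i => ?_
  fin_cases i <;>
    simp [Tmap_apply, PiLp.add_apply, PiLp.smul_apply, EuclideanSpace.single_apply]

lemma Tmap_line1 (x : ℝ) : (fun t => Tmap (x, t)) =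
    fun t => t • (EuclideanSpace.single 1 (1:ℝ)) + Tmap (x, 0) := by
  funext t
  refine PiLp.ext fun i => ?_
  fin_cases i <;>
    simp [Tmap_apply, PiLp.add_apply, PiLp.smul_apply, EuclideanSpace.single_apply]

variable {f : E2 → ℝ}

lemma slice0_hasDerivAt (hf : ContDiff ℝ 1 f) (y s : ℝ) :
    HasDerivAt (fun u => f (Tmap (u, y)))
      (fderiv ℝ f (Tmap (s, y)) (EuclideanSpace.single 0 (1:ℝ))) s := by
  have hlin : HasDerivAt (fun u => Tmap (u, y)) (EuclideanSpace.single 0 (1:ℝ)) s := by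
    rw [Tmap_line0 y]
    simpa using ((hasDerivAt_id s).smul_const (EuclideanSpace.single 0 (1:ℝ))).add_const (Tmap (0, y))
  exact (((hf.differentiable one_ne_zero) (Tmap (s, y))).hasFDerivAt).comp_hasDerivAt s hlin

lemma slice1_hasDerivAt (hf : ContDiff ℝ 1 f) (x t : ℝ) :
    HasDerivAt (fun u => f (Tmap (x, u)))
      (fderiv ℝ f (Tmap (x, t)) (EuclideanSpace.single 1 (1:ℝ))) t := by
  have hlin : HasDerivAt (fun u => Tmap (x, u)) (EuclideanSpace.single 1 (1:ℝ)) t := by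
    rw [Tmap_line1 x]
    simpa using ((hasDerivAt_id t).smul_const (EuclideanSpace.single 1 (1:ℝ))).add_const (Tmap (x, 0))
  exact (((hf.differentiable one_ne_zero) (Tmap (x, t))).hasFDerivAt).comp_hasDerivAt t hlin

-- pointwise key inequality (direction 0)
lemma key0 (hf : ContDiff ℝ 1 f) (hsupp : HasCompactSupport f) (y x : ℝ) :
    f (Tmap (x, y)) ^ 2 ≤
      2 * ∫ s, |f (Tmap (s, y))| * |fderiv ℝ f (Tmap (s, y)) (EuclideanSpace.single 0 (1:ℝ))| := by
  have hgc : ContDiff ℝ 1 (fun s => f (Tmap (s, y))) := by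
    apply hf.comp
    rw [Tmap_line0 y]
    exact (contDiff_id.smul contDiff_const).add contDiff_const
  have hgs : HasCompactSupport (fun s => f (Tmap (s, y))) :=
    aux_hcs hsupp (r := fun v : E2 => v 0) (by
      exact (continuous_apply (0 : Fin 2)).comp (PiLp.continuous_ofLp 2 (fun _ : Fin 2 => ℝ)))
      (fun s => rfl)
  have h := aux_one_dim _ hgc hgs x
  have hdr : deriv (fun u => f (Tmap (u, y))) =
      fun s => fderiv ℝ f (Tmap (s, y)) (EuclideanSpace.single 0 (1:ℝ)) :=
    funext fun s => (slice0_hasDerivAt hf y s).deriv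
  rwa [hdr] at h

lemma key1 (hf : ContDiff ℝ 1 f) (hsupp : HasCompactSupport f) (x y : ℝ) :
    f (Tmap (x, y)) ^ 2 ≤
      2 * ∫ t, |f (Tmap (x, t))| * |fderiv ℝ f (Tmap (x, t)) (EuclideanSpace.single 1 (1:ℝ))| := by
  have hgc : ContDiff ℝ 1 (fun t => f (Tmap (x, t))) := by
    apply hf.comp
    rw [Tmap_line1 x]
    exact (contDiff_id.smul contDiff_const).add contDiff_const
  have hgs : HasCompactSupport (fun t => f (Tmap (x, t))) :=
    aux_hcs hsupp (r := fun v : E2 => v 1) (by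
      exact (continuous_apply (1 : Fin 2)).comp (PiLp.continuous_ofLp 2 (fun _ : Fin 2 => ℝ)))
      (fun t => rfl)
  have h := aux_one_dim _ hgc hgs y
  have hdr : deriv (fun u => f (Tmap (x, u))) =
      fun t => fderiv ℝ f (Tmap (x, t)) (EuclideanSpace.single 1 (1:ℝ)) :=
    funext fun t => (slice1_hasDerivAt hf x t).deriv
  rwa [hdr] at h

lemma grad_eq (hf : ContDiff ℝ 1 f) (x : E2) (v : E2) :
    fderiv ℝ f x v = inner ℝ (gradient f x) v := by
  rw [gradient, InnerProductSpace.toDual_symm_apply]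

lemma abs_fderiv_le (hf : ContDiff ℝ 1 f) (x : E2) (i : Fin 2) :
    |fderiv ℝ f x (EuclideanSpace.single i (1:ℝ))| ≤ ‖gradient f x‖ := by
  rw [grad_eq hf]
  calc |(inner ℝ (gradient f x) (EuclideanSpace.single i (1:ℝ)) : ℝ)|
      ≤ ‖gradient f x‖ * ‖EuclideanSpace.single i (1:ℝ)‖ := abs_real_inner_le_norm _ _
    _ = ‖gradient f x‖ := by rw [EuclideanSpace.norm_single]; simp

lemma cont_D (hf : ContDiff ℝ 1 f) (v : E2) :
    Continuous (fun x => fderiv ℝ f x v) :=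
  (hf.continuous_fderiv one_ne_zero).clm_apply continuous_const

lemma hcs_D (hsupp : HasCompactSupport f) (v : E2) :
    HasCompactSupport (fun x : E2 => fderiv ℝ f x v) :=
  (hsupp.fderiv ℝ).comp_left (g := fun L : E2 →L[ℝ] ℝ => L v) rfl

lemma cont_grad (hf : ContDiff ℝ 1 f) : Continuous (gradient f) := by
  unfold gradient
  exact (InnerProductSpace.toDual ℝ E2).symm.continuous.comp (hf.continuous_fderiv one_ne_zero)

lemma hcs_grad (hsupp : HasCompactSupport f) : HasCompactSupport (gradient f) :=
  (hsupp.fderiv ℝ).comp_left (g := fun L : E2 →L[ℝ] ℝ => (InnerProductSpace.toDual ℝ E2).symm L)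
    (map_zero _)

lemma holder_J (hf : ContDiff ℝ 1 f) (hsupp : HasCompactSupport f) (i : Fin 2) :
    (∫ x, |f x| * |fderiv ℝ f x (EuclideanSpace.single i (1:ℝ))|) ≤
      (∫ x, f x ^ 2) ^ ((1:ℝ)/2) * (∫ x, ‖gradient f x‖ ^ 2) ^ ((1:ℝ)/2) := by
  set v := EuclideanSpace.single i (1:ℝ)
  have hD : Continuous (fun x => fderiv ℝ f x v) := cont_D hf v
  have hDs : HasCompactSupport (fun x : E2 => fderiv ℝ f x v) := hcs_D hsupp v
  have hpq : (2:ℝ).HolderConjugate 2 := Real.HolderConjugate.two_two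
  have h := integral_mul_le_Lp_mul_Lq_of_nonneg (μ := volume) hpq
    (f := fun x => |f x|) (g := fun x => |fderiv ℝ f x v|)
    (Filter.Eventually.of_forall fun x => abs_nonneg _)
    (Filter.Eventually.of_forall fun x => abs_nonneg _)
    ((hf.continuous.abs).memLp_of_hasCompactSupport hsupp.abs)
    ((hD.abs).memLp_of_hasCompactSupport hDs.abs)
  have habs2 : ∀ a : ℝ, |a| ^ (2:ℝ) = a ^ 2 := by
    intro a
    rw [show (2:ℝ) = ((2:ℕ):ℝ) by norm_num, Real.rpow_natCast, sq_abs]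
  simp only [habs2] at h
  refine h.trans (mul_le_mul_of_nonneg_left ?_
    (Real.rpow_nonneg (integral_nonneg fun x => sq_nonneg _) _))
  exact Real.rpow_le_rpow (integral_nonneg fun x => sq_nonneg _)
      (integral_mono
        ((hD.pow 2).integrable_of_hasCompactSupport
          (hDs.comp_left (g := fun t : ℝ => t ^ 2) (by norm_num) :
            HasCompactSupport (fun x => fderiv ℝ f x v ^ 2)))
        (((cont_grad hf).norm.pow 2).integrable_of_hasCompactSupport
          ((hcs_grad hsupp).comp_left (g := fun w : E2 => ‖w‖ ^ 2) (by simp) :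
            HasCompactSupport (fun x => ‖gradient f x‖ ^ 2)))
        (fun x => by
          have := abs_fderiv_le hf x i
          calc fderiv ℝ f x v ^ 2 = |fderiv ℝ f x v| ^ 2 := (sq_abs _).symm
            _ ≤ ‖gradient f x‖ ^ 2 := by
                have h0 : (0:ℝ) ≤ |fderiv ℝ f x v| := abs_nonneg _
                exact pow_le_pow_left₀ h0 this 2))
      (by norm_num)

lemma stepA (hf : ContDiff ℝ 1 f) (hsupp : HasCompactSupport f) :
    (∫ x, f x ^ 4) ≤ 4 *
      ((∫ x, |f x| * |fderiv ℝ f x (EuclideanSpace.single 0 (1:ℝ))|) *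
       (∫ x, |f x| * |fderiv ℝ f x (EuclideanSpace.single 1 (1:ℝ))|)) := by
  set e0 : E2 := EuclideanSpace.single 0 (1:ℝ) with he0
  set e1 : E2 := EuclideanSpace.single 1 (1:ℝ) with he1
  have transfer : ∀ h : E2 → ℝ, ∫ p : ℝ × ℝ, h (Tmap p) = ∫ x, h x :=
    fun h => Tmap_mp.integral_comp Tmap_me h
  set K : ℝ × ℝ → ℝ := fun p => f (Tmap p) with hK
  set m0 : ℝ × ℝ → ℝ := fun p => |f (Tmap p)| * |fderiv ℝ f (Tmap p) e0| with hm0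
  set m1 : ℝ × ℝ → ℝ := fun p => |f (Tmap p)| * |fderiv ℝ f (Tmap p) e1| with hm1
  have hKc : Continuous K := hf.continuous.comp Tmap_cont
  have hrc : Continuous (fun v : E2 => (v 0, v 1)) :=
    ((continuous_apply (0 : Fin 2)).comp (PiLp.continuous_ofLp 2 (fun _ : Fin 2 => ℝ))).prodMk
      ((continuous_apply (1 : Fin 2)).comp (PiLp.continuous_ofLp 2 (fun _ : Fin 2 => ℝ)))
  have hKs : HasCompactSupport K :=
    aux_hcs hsupp (r := fun v : E2 => (v 0, v 1)) hrc (fun p => rfl)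
  have hm0c : Continuous m0 := (hKc.abs).mul ((cont_D hf e0).comp Tmap_cont).abs
  have hm1c : Continuous m1 := (hKc.abs).mul ((cont_D hf e1).comp Tmap_cont).abs
  have hm0i : Integrable m0 (volume.prod volume) := by
    rw [← Measure.volume_eq_prod]
    exact hm0c.integrable_of_hasCompactSupport hKs.abs.mul_right
  have hm1i : Integrable m1 (volume.prod volume) := by
    rw [← Measure.volume_eq_prod]
    exact hm1c.integrable_of_hasCompactSupport hKs.abs.mul_right
  have hK4i : Integrable (fun p => K p ^ 4) volume :=
    (hKc.pow 4).integrable_of_hasCompactSupport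
      (hKs.comp_left (g := fun t : ℝ => t ^ 4) (by norm_num) : HasCompactSupport (fun p => K p ^ 4))
  set G : ℝ → ℝ := fun y => ∫ s, m0 (s, y) with hG
  set H : ℝ → ℝ := fun x => ∫ t, m1 (x, t) with hH
  have hGi : Integrable G := hm0i.swap.integral_prod_left
  have hHi : Integrable H := hm1i.integral_prod_left
  have hGnn : ∀ y, 0 ≤ G y := fun y => integral_nonneg fun s => by positivity
  have hHnn : ∀ x, 0 ≤ H x := fun x => integral_nonneg fun t => by positivity
  have hpt : ∀ p : ℝ × ℝ, K p ^ 4 ≤ (2 * H p.1) * (2 * G p.2) := by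
    intro p
    have h1 : K p ^ 2 ≤ 2 * G p.2 := key0 hf hsupp p.2 p.1
    have h2 : K p ^ 2 ≤ 2 * H p.1 := key1 hf hsupp p.1 p.2
    calc K p ^ 4 = K p ^ 2 * K p ^ 2 := by ring
      _ ≤ (2 * H p.1) * (2 * G p.2) :=
          mul_le_mul h2 h1 (sq_nonneg _) (by linarith [hHnn p.1])
  have hRHSi : Integrable (fun p : ℝ × ℝ => (2 * H p.1) * (2 * G p.2)) volume := by
    rw [Measure.volume_eq_prod]
    exact (hHi.const_mul 2).mul_prod (hGi.const_mul 2)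
  have hGint : ∫ y, G y = ∫ p : ℝ × ℝ, m0 p := by
    have h1 : ∫ y, G y = ∫ z : ℝ × ℝ, m0 (z.2, z.1) ∂(volume.prod volume) :=
      integral_integral (f := fun y s => m0 (s, y)) hm0i.swap
    have h2 : ∫ z : ℝ × ℝ, m0 z.swap ∂(volume.prod volume)
        = ∫ z : ℝ × ℝ, m0 z ∂(volume.prod volume) := integral_prod_swap m0
    rw [h1]
    rw [show (fun z : ℝ × ℝ => m0 (z.2, z.1)) = fun z : ℝ × ℝ => m0 z.swap from rfl] at *
    rw [h2, ← Measure.volume_eq_prod]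
  have hHint : ∫ x, H x = ∫ p : ℝ × ℝ, m1 p := by
    have h1 : ∫ x, H x = ∫ z : ℝ × ℝ, m1 (z.1, z.2) ∂(volume.prod volume) :=
      integral_integral (f := fun x t => m1 (x, t)) hm1i
    rw [h1, ← Measure.volume_eq_prod]
  calc ∫ x, f x ^ 4 = ∫ p : ℝ × ℝ, K p ^ 4 := (transfer (fun x => f x ^ 4)).symm
    _ ≤ ∫ p : ℝ × ℝ, (2 * H p.1) * (2 * G p.2) := integral_mono hK4i hRHSi hpt
    _ = (∫ x, 2 * H x) * (∫ y, 2 * G y) := by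
        rw [Measure.volume_eq_prod]
        exact integral_prod_mul (fun x => 2 * H x) (fun y => 2 * G y)
    _ = 4 * ((∫ y, G y) * (∫ x, H x)) := by
        rw [integral_const_mul, integral_const_mul]; ring
    _ = 4 * ((∫ p : ℝ × ℝ, m0 p) * (∫ p : ℝ × ℝ, m1 p)) := by rw [hGint, hHint]
    _ = 4 * ((∫ x, |f x| * |fderiv ℝ f x e0|) * (∫ x, |f x| * |fderiv ℝ f x e1|)) := by
        rw [hm0, hm1,
          transfer (fun x => |f x| * |fderiv ℝ f x e0|),
          transfer (fun x => |f x| * |fderiv ℝ f x e1|)]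

/-- **Ladyzhenskaya inequality in two dimensions.**
For a continuously differentiable, compactly supported `f : ℝ² → ℝ`,
`‖f‖_{L⁴} ≤ √2 · ‖f‖_{L²}^{1/2} · ‖∇f‖_{L²}^{1/2}`. -/
theorem ladyzhenskaya_inequality (f : EuclideanSpace ℝ (Fin 2) → ℝ)
    (hf : ContDiff ℝ 1 f) (hsupp : HasCompactSupport f) :
    (∫ x, |f x| ^ (4 : ℝ)) ^ ((1 : ℝ) / 4) ≤
      Real.sqrt 2 * (∫ x, |f x| ^ (2 : ℝ)) ^ ((1 : ℝ) / 4) *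
        (∫ x, ‖gradient f x‖ ^ (2 : ℝ)) ^ ((1 : ℝ) / 4) := by
  have h4 : ∀ a : ℝ, a ^ (4:ℝ) = a ^ (4:ℕ) := fun a => by
    rw [show (4:ℝ) = ((4:ℕ):ℝ) by norm_num, Real.rpow_natCast]
  have h2 : ∀ a : ℝ, a ^ (2:ℝ) = a ^ (2:ℕ) := fun a => by
    rw [show (2:ℝ) = ((2:ℕ):ℝ) by norm_num, Real.rpow_natCast]
  have habs4 : ∀ a : ℝ, |a| ^ (4:ℕ) = a ^ (4:ℕ) := fun a => by
    calc |a| ^ (4:ℕ) = (|a| ^ (2:ℕ)) ^ (2:ℕ) := by ring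
      _ = (a ^ (2:ℕ)) ^ (2:ℕ) := by rw [sq_abs]
      _ = a ^ (4:ℕ) := by ring
  simp only [h4, h2, habs4, sq_abs]
  set I4 : ℝ := ∫ x, f x ^ (4:ℕ) with hI4
  set I2 : ℝ := ∫ x, f x ^ (2:ℕ) with hI2
  set IG : ℝ := ∫ x, ‖gradient f x‖ ^ (2:ℕ) with hIG
  have hI4nn : 0 ≤ I4 := integral_nonneg fun x => by positivity
  have hI2nn : 0 ≤ I2 := integral_nonneg fun x => by positivity
  have hIGnn : 0 ≤ IG := integral_nonneg fun x => by positivity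
  set J0 : ℝ := ∫ x, |f x| * |fderiv ℝ f x (EuclideanSpace.single 0 (1:ℝ))| with hJ0
  set J1 : ℝ := ∫ x, |f x| * |fderiv ℝ f x (EuclideanSpace.single 1 (1:ℝ))| with hJ1
  have hJ0nn : 0 ≤ J0 := integral_nonneg fun x => mul_nonneg (abs_nonneg _) (abs_nonneg _)
  have hJ1nn : 0 ≤ J1 := integral_nonneg fun x => mul_nonneg (abs_nonneg _) (abs_nonneg _)
  have hP0 : J0 ≤ Real.sqrt I2 * Real.sqrt IG := by
    have := holder_J hf hsupp 0
    rwa [← Real.sqrt_eq_rpow, ← Real.sqrt_eq_rpow] at this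
  have hP1 : J1 ≤ Real.sqrt I2 * Real.sqrt IG := by
    have := holder_J hf hsupp 1
    rwa [← Real.sqrt_eq_rpow, ← Real.sqrt_eq_rpow] at this
  have key : I4 ≤ 4 * I2 * IG := by
    have h := stepA hf hsupp
    have h2 : J0 * J1 ≤ (Real.sqrt I2 * Real.sqrt IG) * (Real.sqrt I2 * Real.sqrt IG) :=
      mul_le_mul hP0 hP1 hJ1nn (by positivity)
    have h3 : (Real.sqrt I2 * Real.sqrt IG) * (Real.sqrt I2 * Real.sqrt IG) = I2 * IG := by
      rw [show (Real.sqrt I2 * Real.sqrt IG) * (Real.sqrt I2 * Real.sqrt IG)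
        = (Real.sqrt I2 * Real.sqrt I2) * (Real.sqrt IG * Real.sqrt IG) by ring,
        Real.mul_self_sqrt hI2nn, Real.mul_self_sqrt hIGnn]
    calc I4 ≤ 4 * (J0 * J1) := h
      _ ≤ 4 * (I2 * IG) := by nlinarith
      _ = 4 * I2 * IG := by ring
  have hfinal : I4 ^ ((1:ℝ)/4) ≤ (4 * I2 * IG) ^ ((1:ℝ)/4) :=
    Real.rpow_le_rpow hI4nn key (by norm_num)
  refine hfinal.trans_eq ?_
  rw [Real.mul_rpow (by positivity) hIGnn, Real.mul_rpow (by norm_num) hI2nn,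
    show ((4:ℝ)) ^ ((1:ℝ)/4) = Real.sqrt 2 by
      rw [Real.sqrt_eq_rpow, show (4:ℝ) = 2 ^ (2:ℕ) by norm_num,
        ← Real.rpow_natCast 2 2, ← Real.rpow_mul (by norm_num)]
      norm_num]

end
end

section
/- Let Ω ⊆ ℝ² be a measurable set, let ψ : Ω → Ω be a measurable bijection with measurable inverse that preserves two-dimensional Lebesgue measure, and suppose there is a constant K > 0 such that ‖u − v‖ ≤ K · ‖ψ(u) − ψ(v)‖ for all u, v ∈ Ω. Let q ∈ [1, ∞), s ∈ (0, 1), and let a₀ : Ω → ℝ be measurable. Then the Gagliardo double integral satisfies ∫_Ω ∫_Ω |a₀(ψ⁻¹(x)) − a₀(ψ⁻¹(y))|^q / ‖x − y‖^{sq+2} dx dy ≤ K^{sq+2} · ∫_Ω ∫_Ω |a₀(u) − a₀(v)|^q / ‖u − v‖^{sq+2} du dv (as an inequality of extended-real-valued Lebesgue integrals); equivalently, the Gagliardo seminorm of a₀ ∘ ψ⁻¹ of order (s, q) is at most K^{s + 2/q} times that of a₀. -/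
set_option maxHeartbeats 1000000


open MeasureTheory

lemma gagliardo_aux_div (A B C K p : ℝ) (hA : 0 ≤ A) (hB : 0 ≤ B) (hC : 0 ≤ C)
    (hK : 0 < K) (hp : 0 < p) (hCB : C ≤ K * B) (hAC : C = 0 → A = 0) :
    A / B ^ p ≤ K ^ p * (A / C ^ p) := by
  rcases eq_or_lt_of_le hC with hC0 | hC0
  · have hA0 : A = 0 := hAC hC0.symm
    simp [hA0, zero_div]
  · have hB0 : 0 < B := by
      by_contra h
      push_neg at h
      have : B = 0 := le_antisymm h hB
      rw [this, mul_zero] at hCB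
      exact absurd hCB (not_le.mpr hC0)
    rw [mul_div_assoc', div_le_div_iff₀ (by positivity) (by positivity)]
    have h1 : C ^ p ≤ (K * B) ^ p := Real.rpow_le_rpow hC hCB hp.le
    rw [Real.mul_rpow hK.le hB0.le] at h1
    calc A * C ^ p ≤ A * (K ^ p * B ^ p) := by
          exact mul_le_mul_of_nonneg_left h1 hA
      _ = K ^ p * A * B ^ p := by ring

/-- **Change of variables in the Gagliardo seminorm under a measure-preserving,
co-Lipschitz bijection.** If `ψ : Ω → Ω` is a measurable bijection with measurable
inverse preserving 2-D Lebesgue measure and `‖u - v‖ ≤ K ‖ψ u - ψ v‖` on `Ω`, then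
the Gagliardo double integral of `a₀ ∘ ψ⁻¹` of order `(s, q)` is at most
`K^{sq+2}` times that of `a₀`. -/
theorem gagliardo_double_integral_flow (Ω : Set (EuclideanSpace ℝ (Fin 2)))
    (hΩ : MeasurableSet Ω)
    (ψ ψinv : EuclideanSpace ℝ (Fin 2) → EuclideanSpace ℝ (Fin 2))
    (hψmeas : Measurable ψ) (hψinvmeas : Measurable ψinv)
    (hbij : Set.BijOn ψ Ω Ω) (hinv : Set.InvOn ψinv ψ Ω Ω)
    (hmp : MeasurePreserving ψ (volume.restrict Ω) (volume.restrict Ω))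
    (K : ℝ) (hK : 0 < K)
    (hexpand : ∀ u ∈ Ω, ∀ v ∈ Ω, ‖u - v‖ ≤ K * ‖ψ u - ψ v‖)
    (q s : ℝ) (hq : 1 ≤ q) (hs : s ∈ Set.Ioo (0 : ℝ) 1)
    (a₀ : EuclideanSpace ℝ (Fin 2) → ℝ) (ha₀ : Measurable a₀) :
    ∫⁻ x in Ω, ∫⁻ y in Ω,
        ENNReal.ofReal (|a₀ (ψinv x) - a₀ (ψinv y)| ^ q / ‖x - y‖ ^ (s * q + 2))
      ≤ ENNReal.ofReal (K ^ (s * q + 2)) *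
        ∫⁻ u in Ω, ∫⁻ v in Ω,
          ENNReal.ofReal (|a₀ u - a₀ v| ^ q / ‖u - v‖ ^ (s * q + 2)) := by
  set p : ℝ := s * q + 2 with hp_def
  have hp : 0 < p := by
    have := hs.1
    nlinarith
  -- the integrand as a function of two variables
  set h : EuclideanSpace ℝ (Fin 2) → EuclideanSpace ℝ (Fin 2) → ENNReal :=
    fun x y => ENNReal.ofReal (|a₀ (ψinv x) - a₀ (ψinv y)| ^ q / ‖x - y‖ ^ p) with hh
  have hmeas : Measurable (Function.uncurry h) := by
    apply ENNReal.measurable_ofReal.comp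
    apply Measurable.div
    · exact (((ha₀.comp (hψinvmeas.comp measurable_fst)).sub
        (ha₀.comp (hψinvmeas.comp measurable_snd))).abs).pow measurable_const
    · exact ((measurable_fst.sub measurable_snd).norm).pow measurable_const
  have hmeas1 : ∀ x, Measurable (fun y => h x y) := fun x =>
    hmeas.comp (measurable_const.prodMk measurable_id)
  have hF : Measurable (fun x => ∫⁻ y in Ω, h x y) :=
    Measurable.lintegral_prod_right' hmeas
  -- change of variables twice
  have step1 : (∫⁻ x in Ω, ∫⁻ y in Ω, h x y)
      = ∫⁻ u in Ω, ∫⁻ v in Ω, h (ψ u) (ψ v) := by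
    rw [← hmp.lintegral_comp hF]
    refine lintegral_congr fun u => ?_
    rw [← hmp.lintegral_comp (hmeas1 (ψ u))]
  rw [show (∫⁻ x in Ω, ∫⁻ y in Ω,
        ENNReal.ofReal (|a₀ (ψinv x) - a₀ (ψinv y)| ^ q / ‖x - y‖ ^ (s * q + 2)))
      = ∫⁻ x in Ω, ∫⁻ y in Ω, h x y from rfl, step1]
  have key : ∀ u ∈ Ω, ∀ v ∈ Ω, h (ψ u) (ψ v)
      ≤ ENNReal.ofReal (K ^ p) *
        ENNReal.ofReal (|a₀ u - a₀ v| ^ q / ‖u - v‖ ^ p) := by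
    intro u hu v hv
    rw [hh]
    simp only
    rw [hinv.1 hu, hinv.1 hv, ← ENNReal.ofReal_mul (by positivity)]
    apply ENNReal.ofReal_le_ofReal
    apply gagliardo_aux_div _ _ _ _ _ (by positivity) (norm_nonneg _) (norm_nonneg _) hK hp
      (hexpand u hu v hv)
    intro hcz
    have : u = v := by
      have := norm_eq_zero.mp hcz
      exact sub_eq_zero.mp this
    simp [this, Real.zero_rpow (by positivity : q ≠ 0)]
  calc (∫⁻ u in Ω, ∫⁻ v in Ω, h (ψ u) (ψ v))
      ≤ ∫⁻ u in Ω, ∫⁻ v in Ω, ENNReal.ofReal (K ^ p) *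
          ENNReal.ofReal (|a₀ u - a₀ v| ^ q / ‖u - v‖ ^ p) := by
        refine lintegral_mono_ae ?_
        filter_upwards [ae_restrict_mem hΩ] with u hu
        refine lintegral_mono_ae ?_
        filter_upwards [ae_restrict_mem hΩ] with v hv
        exact key u hu v hv
    _ = ENNReal.ofReal (K ^ p) * ∫⁻ u in Ω, ∫⁻ v in Ω,
          ENNReal.ofReal (|a₀ u - a₀ v| ^ q / ‖u - v‖ ^ p) := by
        rw [← lintegral_const_mul' _ _ ENNReal.ofReal_ne_top]
        refine lintegral_congr fun u => ?_
        rw [← lintegral_const_mul' _ _ ENNReal.ofReal_ne_top]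
end

section
/- Let Ω ⊆ ℝ² be a measurable set, let ψ : Ω → Ω be a measurable bijection with measurable inverse that preserves two-dimensional Lebesgue measure, and suppose there is a constant K ≥ 1 such that ‖u − v‖ ≤ K · ‖ψ(u) − ψ(v)‖ for all u, v ∈ Ω. Let q ∈ [1, ∞), s ∈ (0, 1), and let a₀ : Ω → ℝ be measurable. Then ‖a₀ ∘ ψ⁻¹‖_{W^{s,q}(Ω)} ≤ K^{s + 2/q} · ‖a₀‖_{W^{s,q}(Ω)}, where ‖f‖_{W^{s,q}(Ω)} = ‖f‖_{L^q(Ω)} + (∫_Ω ∫_Ω |f(x) − f(y)|^q / ‖x − y‖^{sq+2} dx dy)^{1/q}. -/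
set_option maxHeartbeats 1000000


open MeasureTheory
open scoped ENNReal

/-- **Fractional Sobolev norm bound under a measure-preserving, co-Lipschitz
bijection (Lemma 2.5 of the paper, quantitative form).** If `ψ : Ω → Ω` is a
measurable bijection with measurable inverse preserving 2-D Lebesgue measure and
`‖u - v‖ ≤ K ‖ψ u - ψ v‖` on `Ω` with `K ≥ 1`, then
`‖a₀ ∘ ψ⁻¹‖_{W^{s,q}(Ω)} ≤ K^{s + 2/q} ‖a₀‖_{W^{s,q}(Ω)}`, where
`‖f‖_{W^{s,q}} = ‖f‖_{L^q} + [f]_{W^{s,q}}` (norms computed in `ℝ≥0∞`). -/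
theorem fractional_sobolev_norm_flow (Ω : Set (EuclideanSpace ℝ (Fin 2)))
    (hΩ : MeasurableSet Ω)
    (ψ ψinv : EuclideanSpace ℝ (Fin 2) → EuclideanSpace ℝ (Fin 2))
    (hψmeas : Measurable ψ) (hψinvmeas : Measurable ψinv)
    (hbij : Set.BijOn ψ Ω Ω) (hinv : Set.InvOn ψinv ψ Ω Ω)
    (hmp : MeasurePreserving ψ (volume.restrict Ω) (volume.restrict Ω))
    (K : ℝ) (hK : 1 ≤ K)
    (hexpand : ∀ u ∈ Ω, ∀ v ∈ Ω, ‖u - v‖ ≤ K * ‖ψ u - ψ v‖)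
    (q s : ℝ) (hq : 1 ≤ q) (hs : s ∈ Set.Ioo (0 : ℝ) 1)
    (a₀ : EuclideanSpace ℝ (Fin 2) → ℝ) (ha₀ : Measurable a₀) :
    (∫⁻ x in Ω, ENNReal.ofReal (|a₀ (ψinv x)| ^ q)) ^ (1 / q) +
      (∫⁻ x in Ω, ∫⁻ y in Ω,
        ENNReal.ofReal
          (|a₀ (ψinv x) - a₀ (ψinv y)| ^ q / ‖x - y‖ ^ (s * q + 2))) ^ (1 / q)
      ≤ ENNReal.ofReal (K ^ (s + 2 / q)) *
        ((∫⁻ u in Ω, ENNReal.ofReal (|a₀ u| ^ q)) ^ (1 / q) +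
          (∫⁻ u in Ω, ∫⁻ v in Ω,
            ENNReal.ofReal
              (|a₀ u - a₀ v| ^ q / ‖u - v‖ ^ (s * q + 2))) ^ (1 / q)) := by
  obtain ⟨hs0, hs1⟩ := hs
  have hq0 : (0:ℝ) < q := lt_of_lt_of_le one_pos hq
  have hK0 : (0:ℝ) < K := lt_of_lt_of_le one_pos hK
  set e : ℝ := s * q + 2 with he
  have he0 : (0:ℝ) < e := by have := mul_pos hs0 hq0; simp only [he]; linarith
  have hb : Measurable fun x => a₀ (ψinv x) := ha₀.comp hψinvmeas
  -- constant c and its properties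
  set c : ℝ≥0∞ := ENNReal.ofReal (K ^ (s + 2 / q)) with hc
  have hexp0 : (0:ℝ) ≤ s + 2 / q := by positivity
  have hc1 : (1:ℝ≥0∞) ≤ c := by
    rw [hc]
    refine ENNReal.one_le_ofReal.mpr ?_
    exact Real.one_le_rpow hK hexp0
  -- Part 1 : Lᵠ norm equality
  have hmeas1 : Measurable fun x => ENNReal.ofReal (|a₀ (ψinv x)| ^ q) :=
    ((Real.continuous_rpow_const hq0.le).measurable.comp hb.abs).ennreal_ofReal
  have h1 : (∫⁻ x in Ω, ENNReal.ofReal (|a₀ (ψinv x)| ^ q))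
      = ∫⁻ u in Ω, ENNReal.ofReal (|a₀ u| ^ q) := by
    rw [← hmp.lintegral_comp hmeas1]
    refine setLIntegral_congr_fun hΩ ?_
    intro u hu
    simp [hinv.1 hu]
  -- measurability of the double integrand
  have hFm : Measurable (fun p : EuclideanSpace ℝ (Fin 2) × EuclideanSpace ℝ (Fin 2) =>
      ENNReal.ofReal (|a₀ (ψinv p.1) - a₀ (ψinv p.2)| ^ q / ‖p.1 - p.2‖ ^ e)) := by
    apply Measurable.ennreal_ofReal
    apply Measurable.div
    · exact (Real.continuous_rpow_const hq0.le).measurable.comp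
        (((hb.comp measurable_fst).sub (hb.comp measurable_snd)).abs)
    · exact (Real.continuous_rpow_const he0.le).measurable.comp
        ((measurable_fst.sub measurable_snd).norm)
  have hGm : Measurable (fun p : EuclideanSpace ℝ (Fin 2) × EuclideanSpace ℝ (Fin 2) =>
      ENNReal.ofReal (|a₀ (ψinv p.1) - a₀ (ψinv (ψ p.2))| ^ q / ‖p.1 - ψ p.2‖ ^ e)) := by
    apply Measurable.ennreal_ofReal
    apply Measurable.div
    · exact (Real.continuous_rpow_const hq0.le).measurable.comp
        (((hb.comp measurable_fst).sub ((hb.comp hψmeas).comp measurable_snd)).abs)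
    · exact (Real.continuous_rpow_const he0.le).measurable.comp
        ((measurable_fst.sub (hψmeas.comp measurable_snd)).norm)
  -- Part 2 : change of variables in the double integral
  have h2 : (∫⁻ x in Ω, ∫⁻ y in Ω,
        ENNReal.ofReal (|a₀ (ψinv x) - a₀ (ψinv y)| ^ q / ‖x - y‖ ^ e))
      = ∫⁻ u in Ω, ∫⁻ v in Ω,
        ENNReal.ofReal (|a₀ (ψinv (ψ u)) - a₀ (ψinv (ψ v))| ^ q / ‖ψ u - ψ v‖ ^ e) := by
    have hinner : ∀ x, (∫⁻ y in Ω,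
        ENNReal.ofReal (|a₀ (ψinv x) - a₀ (ψinv y)| ^ q / ‖x - y‖ ^ e))
        = ∫⁻ v in Ω,
        ENNReal.ofReal (|a₀ (ψinv x) - a₀ (ψinv (ψ v))| ^ q / ‖x - ψ v‖ ^ e) := by
      intro x
      refine (hmp.lintegral_comp ?_).symm
      apply Measurable.ennreal_ofReal
      apply Measurable.div
      · exact (Real.continuous_rpow_const hq0.le).measurable.comp
          ((measurable_const.sub hb).abs)
      · exact (Real.continuous_rpow_const he0.le).measurable.comp
          ((measurable_const.sub measurable_id).norm)
    simp only [hinner]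
    exact (hmp.lintegral_comp hGm.lintegral_prod_right').symm
  -- pointwise bound for the double integrand
  have key : ∀ u ∈ Ω, ∀ v ∈ Ω,
      ENNReal.ofReal (|a₀ (ψinv (ψ u)) - a₀ (ψinv (ψ v))| ^ q / ‖ψ u - ψ v‖ ^ e)
        ≤ ENNReal.ofReal (K ^ e) *
          ENNReal.ofReal (|a₀ u - a₀ v| ^ q / ‖u - v‖ ^ e) := by
    intro u hu v hv
    rw [hinv.1 hu, hinv.1 hv, ← ENNReal.ofReal_mul (by positivity)]
    refine ENNReal.ofReal_le_ofReal ?_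
    by_cases huv : u = v
    · simp [huv, Real.zero_rpow hq0.ne']
    · have hd0 : 0 < ‖u - v‖ := by
        rw [norm_pos_iff]
        exact sub_ne_zero.mpr huv
      have hd : 0 < ‖ψ u - ψ v‖ := by
        rcases lt_or_ge 0 ‖ψ u - ψ v‖ with h | h
        · exact h
        · exfalso
          have h2 := hexpand u hu v hv
          nlinarith
      have hpow1 : ‖u - v‖ ^ e ≤ K ^ e * ‖ψ u - ψ v‖ ^ e := by
        calc ‖u - v‖ ^ e ≤ (K * ‖ψ u - ψ v‖) ^ e :=
              Real.rpow_le_rpow (norm_nonneg _) (hexpand u hu v hv) he0.le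
          _ = K ^ e * ‖ψ u - ψ v‖ ^ e := Real.mul_rpow hK0.le (norm_nonneg _)
      have hN : 0 ≤ |a₀ u - a₀ v| ^ q := Real.rpow_nonneg (abs_nonneg _) q
      rw [← mul_div_assoc,
        div_le_div_iff₀ (Real.rpow_pos_of_pos hd e) (Real.rpow_pos_of_pos hd0 e)]
      nlinarith [mul_le_mul_of_nonneg_left hpow1 hN]
  -- integrate the pointwise bound
  have h3 : (∫⁻ u in Ω, ∫⁻ v in Ω,
        ENNReal.ofReal (|a₀ (ψinv (ψ u)) - a₀ (ψinv (ψ v))| ^ q / ‖ψ u - ψ v‖ ^ e))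
      ≤ ENNReal.ofReal (K ^ e) *
        ∫⁻ u in Ω, ∫⁻ v in Ω,
          ENNReal.ofReal (|a₀ u - a₀ v| ^ q / ‖u - v‖ ^ e) := by
    rw [← lintegral_const_mul' _ _ ENNReal.ofReal_ne_top]
    refine setLIntegral_mono' hΩ ?_
    intro u hu
    rw [← lintegral_const_mul' _ _ ENNReal.ofReal_ne_top]
    refine setLIntegral_mono' hΩ ?_
    intro v hv
    exact key u hu v hv
  -- relate the constants
  have hcK : ENNReal.ofReal (K ^ e) ^ (1 / q) = c := by
    rw [ENNReal.ofReal_rpow_of_pos (Real.rpow_pos_of_pos hK0 e),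
      ← Real.rpow_mul hK0.le, hc]
    congr 1
    rw [he]
    field_simp
  -- assemble
  rw [h1, h2, mul_add]
  refine add_le_add (le_mul_of_one_le_left zero_le hc1) ?_
  refine le_trans (ENNReal.rpow_le_rpow h3 (by positivity)) ?_
  rw [ENNReal.mul_rpow_of_nonneg _ _ (by positivity), hcK]
end
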